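/- For every integer n ≥ 1 and every real number r with −1 < r < 1 and r ≠ 0, the sum ∑_{i=1}^n i^r is at most (r/(r+1)) · n^r (n+1)^r / ((n+1)^r − n^r). -/

import Mathlib

open Real Set

private lemma aux_concave (p u : ℝ) (hp0 : 0 ≤ p) (hp1 : p ≤ 1) (hu0 : 0 ≤ u) (hu1 : u < 1) :
    (1+u)^p + (1-u)^p ≤ 2 := by
  have h1 := rpow_one_add_le_one_add_mul_self (s := u) (by linarith) hp0 hp1
  have h2 := rpow_one_add_le_one_add_mul_self (s := -u) (by linarith) hp0 hp1
  have h2' : (1-u)^p ≤ 1 - p*u := by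
    rw [show (1:ℝ)-u = 1 + -u by ring]
    calc (1 + -u)^p ≤ 1 + p * -u := h2
      _ = 1 - p*u := by ring
  linarith

private lemma aux_convex (p u : ℝ) (hp0 : p < 0) (hp1 : -1 < p) (hu0 : 0 ≤ u) (hu1 : u < 1) :
    2 ≤ (1+u)^p + (1-u)^p := by
  have h1 : (0:ℝ) < 1 + u := by linarith
  have h2 : (0:ℝ) < 1 - u := by linarith
  set A := (1+u)^p with hA
  set B := (1-u)^p with hB
  have hApos : 0 < A := rpow_pos_of_pos h1 p
  have hBpos : 0 < B := rpow_pos_of_pos h2 p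
  have hAB : 1 ≤ A * B := by
    rw [hA, hB, ← Real.mul_rpow h1.le h2.le]
    exact Real.one_le_rpow_of_pos_of_le_one_of_nonpos (by nlinarith) (by nlinarith) hp0.le
  nlinarith [sq_nonneg (A - B), hApos, hBpos, hAB]



private lemma lemA1 (s t : ℝ) (hs1 : 1 < s) (hs2 : s < 2) (ht0 : 0 ≤ t) (ht1 : t < 1) :
    (1+t)^s - (1-t)^s ≤ 2*s*t := by
  set f : ℝ → ℝ := fun u => 2*s*u - (1+u)^s + (1-u)^s with hf
  have hder : ∀ u ∈ Ioo (0:ℝ) t, HasDerivAt f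
      ((2*s*1 - 1*s*(1+u)^(s-1)) + (-1)*s*(1-u)^(s-1)) u := by
    intro u hu
    have h1 : (0:ℝ) < 1 + u := by linarith [hu.1]
    have h2 : (0:ℝ) < 1 - u := by have := hu.2; linarith
    have d1 : HasDerivAt (fun u : ℝ => 2*s*u) (2*s*1) u := (hasDerivAt_id u).const_mul (2*s)
    have d2 : HasDerivAt (fun u : ℝ => (1+u)^s) (1*s*(1+u)^(s-1)) u :=
      (HasDerivAt.const_add 1 (hasDerivAt_id u)).rpow_const (Or.inl h1.ne')
    have d3 : HasDerivAt (fun u : ℝ => (1-u)^s) ((-1)*s*(1-u)^(s-1)) u := by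
      have := ((hasDerivAt_id u).const_sub 1).rpow_const (p := s) (Or.inl h2.ne')
      simpa using this
    exact (d1.sub d2).add d3
  have hcont : ContinuousOn f (Icc 0 t) := by
    apply ContinuousOn.add
    apply ContinuousOn.sub
    · exact (continuous_const.mul continuous_id).continuousOn
    · apply ContinuousOn.rpow_const
      · exact (continuous_const.add continuous_id).continuousOn
      · intro x hx; exact Or.inr (by linarith)
    · apply ContinuousOn.rpow_const
      · exact (continuous_const.sub continuous_id).continuousOn
      · intro x hx; exact Or.inr (by linarith)
  have hmono : MonotoneOn f (Icc 0 t) := by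
    apply monotoneOn_of_deriv_nonneg (convex_Icc 0 t) hcont
    · intro u hu
      rw [interior_Icc] at hu
      exact (hder u hu).differentiableAt.differentiableWithinAt
    · intro u hu
      rw [interior_Icc] at hu
      rw [(hder u hu).deriv]
      have hc := aux_concave (s-1) u (by linarith) (by linarith) hu.1.le
        (by have := hu.2; linarith)
      nlinarith
  have h0t : (0:ℝ) ∈ Icc (0:ℝ) t := left_mem_Icc.2 ht0
  have htt : t ∈ Icc (0:ℝ) t := right_mem_Icc.2 ht0
  have := hmono h0t htt ht0
  simp only [hf, mul_zero, zero_add, sub_zero, add_zero, Real.one_rpow] at this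
  linarith

private lemma lemA2 (s t : ℝ) (hs1 : 0 < s) (hs2 : s < 1) (ht0 : 0 ≤ t) (ht1 : t < 1) :
    2*s*t ≤ (1+t)^s - (1-t)^s := by
  set f : ℝ → ℝ := fun u => (1+u)^s - (1-u)^s - 2*s*u with hf
  have hder : ∀ u ∈ Ioo (0:ℝ) t, HasDerivAt f
      ((1*s*(1+u)^(s-1) - (-1)*s*(1-u)^(s-1)) - 2*s*1) u := by
    intro u hu
    have h1 : (0:ℝ) < 1 + u := by linarith [hu.1]
    have h2 : (0:ℝ) < 1 - u := by have := hu.2; linarith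
    have d1 : HasDerivAt (fun u : ℝ => 2*s*u) (2*s*1) u := (hasDerivAt_id u).const_mul (2*s)
    have d2 : HasDerivAt (fun u : ℝ => (1+u)^s) (1*s*(1+u)^(s-1)) u :=
      (HasDerivAt.const_add 1 (hasDerivAt_id u)).rpow_const (Or.inl h1.ne')
    have d3 : HasDerivAt (fun u : ℝ => (1-u)^s) ((-1)*s*(1-u)^(s-1)) u := by
      have := ((hasDerivAt_id u).const_sub 1).rpow_const (p := s) (Or.inl h2.ne')
      simpa using this
    exact (d2.sub d3).sub d1
  have hcont : ContinuousOn f (Icc 0 t) := by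
    apply ContinuousOn.sub
    apply ContinuousOn.sub
    · apply ContinuousOn.rpow_const
      · exact (continuous_const.add continuous_id).continuousOn
      · intro x hx; exact Or.inr (by linarith)
    · apply ContinuousOn.rpow_const
      · exact (continuous_const.sub continuous_id).continuousOn
      · intro x hx; exact Or.inr (by linarith)
    · exact (continuous_const.mul continuous_id).continuousOn
  have hmono : MonotoneOn f (Icc 0 t) := by
    apply monotoneOn_of_deriv_nonneg (convex_Icc 0 t) hcont
    · intro u hu
      rw [interior_Icc] at hu
      exact (hder u hu).differentiableAt.differentiableWithinAt
    · intro u hu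
      rw [interior_Icc] at hu
      rw [(hder u hu).deriv]
      have hc := aux_convex (s-1) u (by linarith) (by linarith) hu.1.le
        (by have := hu.2; linarith)
      nlinarith
  have h0t : (0:ℝ) ∈ Icc (0:ℝ) t := left_mem_Icc.2 ht0
  have htt : t ∈ Icc (0:ℝ) t := right_mem_Icc.2 ht0
  have := hmono h0t htt ht0
  simp only [hf, mul_zero, zero_add, sub_zero, add_zero, Real.one_rpow] at this
  linarith



private lemma lemB (r t : ℝ) (hr1 : -1 < r) (hr2 : r < 1) (ht0 : 0 ≤ t) (ht1 : t < 1) :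
    r^2 ≤ ((1-r)*(1-t)^r - 1) * ((1-r)*(1+t)^r - 1) := by
  rcases eq_or_ne r 0 with rfl | hr0
  · norm_num
  set Φ : ℝ → ℝ := fun u => ((1-r)*(1-u)^r - 1) * ((1-r)*(1+u)^r - 1) with hΦ
  have hder : ∀ u ∈ Ioo (0:ℝ) t, HasDerivAt Φ
      (((1-r) * ((-1)*r*(1-u)^(r-1))) * ((1-r)*(1+u)^r - 1)
        + ((1-r)*(1-u)^r - 1) * ((1-r) * (1*r*(1+u)^(r-1)))) u := by
    intro u hu
    have h1 : (0:ℝ) < 1 - u := by have := hu.2; linarith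
    have h2 : (0:ℝ) < 1 + u := by linarith [hu.1]
    have d0 : HasDerivAt (fun u : ℝ => (1-u)^r) ((-1)*r*(1-u)^(r-1)) u := by
      have := ((hasDerivAt_id u).const_sub 1).rpow_const (p := r) (Or.inl h1.ne')
      simpa using this
    have d0' : HasDerivAt (fun u : ℝ => (1+u)^r) (1*r*(1+u)^(r-1)) u :=
      (HasDerivAt.const_add 1 (hasDerivAt_id u)).rpow_const (Or.inl h2.ne')
    exact ((d0.const_mul (1-r)).sub_const 1).mul ((d0'.const_mul (1-r)).sub_const 1)
  have hcont : ContinuousOn Φ (Icc 0 t) := by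
    apply ContinuousOn.mul
    · apply ContinuousOn.sub _ continuousOn_const
      apply ContinuousOn.mul continuousOn_const
      apply ContinuousOn.rpow_const
      · exact (continuous_const.sub continuous_id).continuousOn
      · intro x hx; exact Or.inl (by intro h; nlinarith [hx.2, ht1])
    · apply ContinuousOn.sub _ continuousOn_const
      apply ContinuousOn.mul continuousOn_const
      apply ContinuousOn.rpow_const
      · exact (continuous_const.add continuous_id).continuousOn
      · intro x hx; exact Or.inl (by intro h; nlinarith [hx.1])
  have hmono : MonotoneOn Φ (Icc 0 t) := by
    apply monotoneOn_of_deriv_nonneg (convex_Icc 0 t) hcont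
    · intro u hu
      rw [interior_Icc] at hu
      exact (hder u hu).differentiableAt.differentiableWithinAt
    · intro u hu
      rw [interior_Icc] at hu
      rw [(hder u hu).deriv]
      have hu0 : 0 < u := hu.1
      have hu1 : u < 1 := lt_of_lt_of_le hu.2 ht1.le
      have h1 : (0:ℝ) < 1 - u := by linarith
      have h2 : (0:ℝ) < 1 + u := by linarith
      have h3 : (0:ℝ) < 1 - u^2 := by nlinarith
      set X := (1-u)^(1-r) with hX
      set Y := (1+u)^(1-r) with hY
      set P := (1-u^2)^(r-1) with hP
      have hPpos : 0 < P := rpow_pos_of_pos h3 _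
      have hfact : ((1:ℝ)-u^2) = (1-u)*(1+u) := by ring
      have e5 : X * Y * P = 1 := by
        rw [hX, hY, hP, ← Real.mul_rpow h1.le h2.le, hfact, ← Real.rpow_add (by rw [← hfact]; exact h3),
          show (1-r)+(r-1) = 0 by ring, Real.rpow_zero]
      have e1 : Y * P = (1-u)^(r-1) := by
        rw [hY, hP, hfact, Real.mul_rpow h1.le h2.le]
        calc (1+u)^(1-r) * ((1-u)^(r-1) * (1+u)^(r-1))
            = (1-u)^(r-1) * ((1+u)^(1-r) * (1+u)^(r-1)) := by ring
          _ = (1-u)^(r-1) * (1+u)^((1-r)+(r-1)) := by rw [Real.rpow_add h2]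
          _ = (1-u)^(r-1) := by rw [show (1-r)+(r-1) = 0 by ring, Real.rpow_zero, mul_one]
      have e2 : X * P = (1+u)^(r-1) := by
        rw [hX, hP, hfact, Real.mul_rpow h1.le h2.le]
        calc (1-u)^(1-r) * ((1-u)^(r-1) * (1+u)^(r-1))
            = (1+u)^(r-1) * ((1-u)^(1-r) * (1-u)^(r-1)) := by ring
          _ = (1+u)^(r-1) * (1-u)^((1-r)+(r-1)) := by rw [Real.rpow_add h1]
          _ = (1+u)^(r-1) := by rw [show (1-r)+(r-1) = 0 by ring, Real.rpow_zero, mul_one]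
      have e3 : (1-u)^r = (1-u) * (1-u)^(r-1) := by
        rw [show r = 1 + (r-1) by ring, Real.rpow_add h1, Real.rpow_one]
        ring_nf
      have e4 : (1+u)^r = (1+u) * (1+u)^(r-1) := by
        rw [show r = 1 + (r-1) by ring, Real.rpow_add h2, Real.rpow_one]
        ring_nf
      have hA : 0 ≤ r * (Y - X - 2*u*(1-r)) := by
        rcases hr0.lt_or_gt with hneg | hpos
        · have := lemA1 (1-r) u (by linarith) (by linarith) hu0.le hu1
          rw [← hY, ← hX] at this
          nlinarith
        · have := lemA2 (1-r) u (by linarith) (by linarith) hu0.le hu1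
          rw [← hY, ← hX] at this
          nlinarith
      have hkey : ((1-r) * ((-1)*r*(1-u)^(r-1))) * ((1-r)*(1+u)^r - 1)
          + ((1-r)*(1-u)^r - 1) * ((1-r) * (1*r*(1+u)^(r-1)))
          = (1-r) * P * (r * (Y - X - 2*u*(1-r))) := by
        rw [e3, e4, ← e1, ← e2]
        linear_combination (-2*u*r*(1-r)^2*P) * e5
      rw [hkey]
      exact mul_nonneg (mul_nonneg (by linarith) hPpos.le) hA
  have h0t : (0:ℝ) ∈ Icc (0:ℝ) t := left_mem_Icc.2 ht0
  have htt : t ∈ Icc (0:ℝ) t := right_mem_Icc.2 ht0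
  have hm := hmono h0t htt ht0
  have hΦ0 : Φ 0 = r^2 := by
    simp only [hΦ, sub_zero, add_zero, Real.one_rpow, mul_one]
    ring
  rw [hΦ0] at hm
  exact hm


private lemma lemKey (r : ℝ) (hr1 : -1 < r) (hr2 : r < 1) (hr0 : r ≠ 0) (x : ℝ) (hx : 2 ≤ x) :
    r/(r+1) * ((x-1)^r * x^r / (x^r - (x-1)^r)) + x^r ≤
      r/(r+1) * (x^r * (x+1)^r / ((x+1)^r - x^r)) := by
  have hx0 : (0:ℝ) < x := by linarith
  set t := 1/x with htdef
  have ht0 : 0 < t := by positivity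
  have ht1 : t < 1 := by rw [htdef, div_lt_one hx0]; linarith
  have hxt1 : x - 1 = x * (1-t) := by rw [htdef]; field_simp
  have hxt2 : x + 1 = x * (1+t) := by rw [htdef]; field_simp
  set a := (1-t)^r with hadef
  set b := (1+t)^r with hbdef
  set X := x^r with hXdef
  have hXpos : 0 < X := rpow_pos_of_pos hx0 r
  have ha : (x-1)^r = X * a := by
    rw [hxt1, Real.mul_rpow hx0.le (by linarith), hXdef, hadef]
  have hb : (x+1)^r = X * b := by
    rw [hxt2, Real.mul_rpow hx0.le (by linarith), hXdef, hbdef]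
  rw [ha, hb]
  have h1r : (0:ℝ) < 1 - r := by linarith
  have hr1' : (0:ℝ) < r + 1 := by linarith
  have hd : 0 < (1-a) * (b-1) := by
    rcases hr0.lt_or_gt with hneg | hpos
    · have ha1 : 1 < a := by
        rw [hadef]
        exact (Real.one_lt_rpow_iff_of_pos (by linarith)).2 (Or.inr ⟨by linarith, hneg⟩)
      have hb1 : b < 1 := by
        rw [hbdef]
        exact Real.rpow_lt_one_of_one_lt_of_neg (by linarith) hneg
      nlinarith
    · have ha1 : a < 1 := by
        rw [hadef]
        exact Real.rpow_lt_one (by linarith) (by linarith) hpos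
      have hb1 : 1 < b := by
        rw [hbdef]
        exact (Real.one_lt_rpow_iff_of_pos (by linarith)).2 (Or.inl ⟨by linarith, hpos⟩)
      nlinarith
  have hG : 0 ≤ (1-r)*(a*b) - (a+b) + (1+r) := by
    have hB := lemB r t hr1 hr2 ht0.le ht1
    rw [← hadef, ← hbdef] at hB
    nlinarith [hB, h1r]
  have hane : (1:ℝ) - a ≠ 0 := by intro h; rw [h] at hd; simp at hd
  have hbne : b - 1 ≠ 0 := by intro h; rw [h] at hd; simp at hd
  have hEq : r/(r+1) * (X * (X*b) / (X*b - X)) - (r/(r+1) * ((X*a) * X / (X - X*a)) + X)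
      = X * (((1-r)*(a*b) - (a+b) + (1+r)) / ((r+1)*((1-a)*(b-1)))) := by
    rw [show X*b - X = X*(b-1) by ring, show X - X*a = X*(1-a) by ring]
    field_simp
    ring
  have hpos2 : 0 ≤ X * (((1-r)*(a*b) - (a+b) + (1+r)) / ((r+1)*((1-a)*(b-1)))) :=
    mul_nonneg hXpos.le (div_nonneg hG (by positivity))
  linarith [hEq ▸ hpos2]


private lemma base_case (r : ℝ) (hr1 : -1 < r) (hr2 : r < 1) (hr0 : r ≠ 0) :
    (1:ℝ) ≤ r/(r+1) * ((1:ℝ)^r * (2:ℝ)^r / ((2:ℝ)^r - (1:ℝ)^r)) := by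
  rw [Real.one_rpow, one_mul]
  have h2 : (2:ℝ) = 1 + 1 := by norm_num
  have hr1' : (0:ℝ) < r + 1 := by linarith
  rcases hr0.lt_or_gt with hneg | hpos
  · have hlt : (2:ℝ)^r < 1 := Real.rpow_lt_one_of_one_lt_of_neg one_lt_two hneg
    have hb : (2:ℝ)^(-r) ≤ 1 + (-r) := by
      rw [h2]
      calc ((1:ℝ)+1)^(-r) ≤ 1 + (-r)*1 :=
            rpow_one_add_le_one_add_mul_self (by norm_num) (by linarith) (by linarith)
        _ = 1 + (-r) := by ring
    have hprod : (2:ℝ)^r * (2:ℝ)^(-r) = 1 := by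
      rw [← Real.rpow_add two_pos]; simp
    have hpos2 : (0:ℝ) < (2:ℝ)^r := rpow_pos_of_pos two_pos r
    have hge : 1 + r ≤ (2:ℝ)^r := by nlinarith [sq_nonneg r, rpow_pos_of_pos two_pos (-r)]
    have hEq : r/(r+1) * ((2:ℝ)^r / ((2:ℝ)^r - 1)) - 1
        = ((r+1) - (2:ℝ)^r) / ((r+1)*((2:ℝ)^r - 1)) := by
      have hne : (2:ℝ)^r - 1 ≠ 0 := by intro h; nlinarith
      field_simp
      ring
    have hnum : (r+1) - (2:ℝ)^r ≤ 0 := by linarith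
    have hden : (r+1)*((2:ℝ)^r - 1) < 0 := by nlinarith
    have : 0 ≤ ((r+1) - (2:ℝ)^r) / ((r+1)*((2:ℝ)^r - 1)) := div_nonneg_of_nonpos hnum hden.le
    linarith
  · have hlt : 1 < (2:ℝ)^r := (Real.one_lt_rpow_iff_of_pos two_pos).2 (Or.inl ⟨one_lt_two, hpos⟩)
    have hb : (2:ℝ)^r ≤ 1 + r := by
      rw [h2]
      calc ((1:ℝ)+1)^r ≤ 1 + r*1 :=
            rpow_one_add_le_one_add_mul_self (by norm_num) (by linarith) (by linarith)
        _ = 1 + r := by ring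
    have hEq : r/(r+1) * ((2:ℝ)^r / ((2:ℝ)^r - 1)) - 1
        = ((r+1) - (2:ℝ)^r) / ((r+1)*((2:ℝ)^r - 1)) := by
      have hne : (2:ℝ)^r - 1 ≠ 0 := by intro h; nlinarith
      field_simp
      ring
    have : 0 ≤ ((r+1) - (2:ℝ)^r) / ((r+1)*((2:ℝ)^r - 1)) :=
      div_nonneg (by linarith) (by nlinarith)
    linarith

theorem levin_steckin_reversed (n : ℕ) (hn : 1 ≤ n) (r : ℝ) (hr1 : -1 < r) (hr2 : r < 1)
    (hr0 : r ≠ 0) :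
    ∑ i ∈ Finset.Icc 1 n, (i : ℝ) ^ r ≤
      (r / (r + 1)) * ((n : ℝ) ^ r * (n + 1 : ℝ) ^ r / ((n + 1 : ℝ) ^ r - (n : ℝ) ^ r)) := by
  induction n, hn using Nat.le_induction with
  | base =>
    have := base_case r hr1 hr2 hr0
    simp only [Finset.Icc_self, Finset.sum_singleton, Nat.cast_one, Real.one_rpow]
    norm_num
    convert this using 3 <;> norm_num
  | succ n hn ih =>
    rw [Finset.sum_Icc_succ_top (by omega : 1 ≤ n+1)]
    have h2x : (2:ℝ) ≤ (n:ℝ) + 1 := by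
      have : (1:ℝ) ≤ (n:ℝ) := by exact_mod_cast hn
      linarith
    have hkey := lemKey r hr1 hr2 hr0 ((n:ℝ)+1) h2x
    rw [show (n:ℝ)+1-1 = (n:ℝ) by ring] at hkey
    push_cast
    have hih := ih
    calc ∑ i ∈ Finset.Icc 1 n, (i : ℝ) ^ r + ((n:ℝ)+1)^r
        ≤ r/(r+1) * ((n:ℝ)^r * ((n:ℝ)+1)^r / (((n:ℝ)+1)^r - (n:ℝ)^r)) + ((n:ℝ)+1)^r := by
          linarith [hih]
      _ ≤ r/(r+1) * (((n:ℝ)+1)^r * ((n:ℝ)+1+1)^r / ((((n:ℝ)+1)+1)^r - ((n:ℝ)+1)^r)) := hkey
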